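/- Let (X, D) be a locally compact, complete metric space, α > 1, and Ω ⊆ X an open set with D_α(Ω) ≠ ∅. Let (d_n)_{n∈ℕ} ⊆ D_α(Ω) and d ∈ D_α(Ω). If d_n → d uniformly on compact subsets of Ω × Ω, then L_{d_n} Γ-converges to L_d on Lip([0,1]; Ω) with the topology of uniform convergence: for every sequence of Lipschitz curves γⁿ : [0,1] → Ω converging uniformly to a Lipschitz curve γ : [0,1] → Ω one has L_d(γ) ≤ liminf_n L_{d_n}(γⁿ), and for every Lipschitz curve γ : [0,1] → Ω there exist Lipschitz curves γⁿ : [0,1] → Ω converging uniformly to γ with limsup_n L_{d_n}(γⁿ) ≤ L_d(γ). -/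

import Mathlib

open Filter MeasureTheory Set
open scoped ENNReal Topology

/-- Length of the curve `γ` on the interval `[a, b]`, with respect to the
(candidate) distance `d`, defined as a supremum over finite partitions. -/
noncomputable def pathLengthOn {E : Type*} (d : E → E → ℝ) (γ : ℝ → E) (a b : ℝ) : ℝ≥0∞ :=
  ⨆ (k : ℕ) (t : Fin (k + 1) → ℝ) (_ : Monotone t) (_ : t 0 = a) (_ : t (Fin.last k) = b),
    ∑ i : Fin k, ENNReal.ofReal (d (γ (t i.succ)) (γ (t i.castSucc)))

/-- Length of the curve `γ : [0,1] → E` with respect to `d`. -/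
noncomputable def pathLength {E : Type*} (d : E → E → ℝ) (γ : ℝ → E) : ℝ≥0∞ :=
  pathLengthOn d γ 0 1

/-- `d` is a distance on `E`. -/
def IsDistance {E : Type*} (d : E → E → ℝ) : Prop :=
  (∀ x y, d x y = d y x) ∧ (∀ x y z, d x z ≤ d x y + d y z) ∧ ∀ x y, d x y = 0 ↔ x = y

/-- `γ : [0,1] → E` is a Lipschitz curve with respect to `d`. -/
def LipCurve {E : Type*} (d : E → E → ℝ) (γ : ℝ → E) : Prop :=
  ∃ K : ℝ, ∀ s ∈ Icc (0 : ℝ) 1, ∀ t ∈ Icc (0 : ℝ) 1, d (γ s) (γ t) ≤ K * |s - t|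

/-- `(E, d)` is a length space: `d x y` is the infimum of lengths of Lipschitz
curves `γ : [0,1] → E` joining `x` to `y`. -/
def IsLengthDist {E : Type*} (d : E → E → ℝ) : Prop :=
  ∀ x y : E, ENNReal.ofReal (d x y) =
    ⨅ (γ : ℝ → E) (_ : LipCurve d γ) (_ : γ 0 = x) (_ : γ 1 = y), pathLength d γ

/-- `d ∈ 𝒟_α(Ω)` : `d` is a distance on `Ω` making it a length space and satisfying
`α⁻¹ D ≤ d ≤ α D`. -/
def MemD {X : Type*} [MetricSpace X] (α : ℝ) (Ω : Set X) (d : Ω → Ω → ℝ) : Prop :=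
  IsDistance d ∧ IsLengthDist d ∧
    ∀ x y : Ω, α⁻¹ * dist (x : X) (y : X) ≤ d x y ∧ d x y ≤ α * dist (x : X) (y : X)

/-- Uniform convergence `dn → d` on compact subsets of `E × E`. -/
def TendstoUnifCompactly {E : Type*} [TopologicalSpace E]
    (dn : ℕ → E → E → ℝ) (d : E → E → ℝ) : Prop :=
  ∀ K : Set (E × E), IsCompact K → ∀ ε : ℝ, 0 < ε →
    ∃ N : ℕ, ∀ n ≥ N, ∀ p ∈ K, |dn n p.1 p.2 - d p.1 p.2| < ε

/-- `e` is a continuous extension of `d : Ω → Ω → ℝ` to the closure of `Ω`. -/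
def IsContExt {X : Type*} [MetricSpace X] (Ω : Set X) (d : Ω → Ω → ℝ)
    (e : closure Ω → closure Ω → ℝ) : Prop :=
  Continuous (fun p : closure Ω × closure Ω => e p.1 p.2) ∧
    ∀ x y : Ω, e ⟨x, subset_closure x.2⟩ ⟨y, subset_closure y.2⟩ = d x y

/-- `(E, d)` is a geodesic space: any two points are joined by a constant-speed curve
`γ : [0,1] → E` whose length on each subinterval `[t,s]` equals `d (γ t) (γ s)`. -/
def IsGeodesicDist {E : Type*} (d : E → E → ℝ) : Prop :=
  ∀ x y : E, ∃ γ : ℝ → E, γ 0 = x ∧ γ 1 = y ∧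
    (∀ t s : ℝ, 0 ≤ t → t ≤ s → s ≤ 1 →
      pathLengthOn d γ t s = pathLength d γ * ENNReal.ofReal (s - t)) ∧
    ∀ t s : ℝ, 0 ≤ t → t ≤ s → s ≤ 1 →
      pathLengthOn d γ t s = ENNReal.ofReal (d (γ t) (γ s))

/-- Uniform convergence on `[0,1]` of a sequence of curves. -/
def UnifConvCurves {E : Type*} [MetricSpace E] (γn : ℕ → ℝ → E) (γ : ℝ → E) : Prop :=
  ∀ ε : ℝ, 0 < ε → ∃ N : ℕ, ∀ n ≥ N, ∀ t ∈ Icc (0 : ℝ) 1, dist (γn n t) (γ t) < ε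

/-- Γ-convergence of the length functionals `L_{dn}` to `L_d` on the space of
Lipschitz curves `[0,1] → E` with the topology of uniform convergence. -/
def GammaConvLengths {E : Type*} [MetricSpace E] (dn : ℕ → E → E → ℝ) (d : E → E → ℝ) : Prop :=
  (∀ (γn : ℕ → ℝ → E) (γ : ℝ → E),
      (∀ n, LipCurve (fun x y : E => dist x y) (γn n)) →
      LipCurve (fun x y : E => dist x y) γ → UnifConvCurves γn γ →
      pathLength d γ ≤ liminf (fun n => pathLength (dn n) (γn n)) atTop) ∧
  ∀ γ : ℝ → E, LipCurve (fun x y : E => dist x y) γ →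
    ∃ γn : ℕ → ℝ → E, (∀ n, LipCurve (fun x y : E => dist x y) (γn n)) ∧
      UnifConvCurves γn γ ∧
      limsup (fun n => pathLength (dn n) (γn n)) atTop ≤ pathLength d γ

section helpers
variable {E : Type*} (d : E → E → ℝ) (γ : ℝ → E) {a b : ℝ}

lemma sum_le_pathLengthOn {k : ℕ} {t : Fin (k+1) → ℝ} (ht : Monotone t)
    (h0 : t 0 = a) (h1 : t (Fin.last k) = b) :
    ∑ i : Fin k, ENNReal.ofReal (d (γ (t i.succ)) (γ (t i.castSucc))) ≤ pathLengthOn d γ a b := by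
  unfold pathLengthOn
  exact le_iSup_of_le k <| le_iSup_of_le t <| le_iSup_of_le ht <| le_iSup_of_le h0 <|
    le_iSup_of_le h1 le_rfl

lemma pathLengthOn_le {C : ℝ≥0∞}
    (h : ∀ (k : ℕ) (t : Fin (k+1) → ℝ), Monotone t → t 0 = a → t (Fin.last k) = b →
      ∑ i : Fin k, ENNReal.ofReal (d (γ (t i.succ)) (γ (t i.castSucc))) ≤ C) :
    pathLengthOn d γ a b ≤ C := by
  unfold pathLengthOn
  exact iSup_le fun k => iSup_le fun t => iSup_le fun ht => iSup_le fun h0 =>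
    iSup_le fun h1 => h k t ht h0 h1

lemma pathLengthOn_self (hrefl : ∀ x, d x x = 0) : pathLengthOn d γ a a = 0 := by
  refine le_antisymm (pathLengthOn_le d γ fun k t ht h0 h1 => ?_) zero_le
  have hconst : ∀ i, t i = a := fun i =>
    le_antisymm (h1 ▸ ht (Fin.le_last i)) (h0 ▸ ht (Fin.zero_le i))
  simp [hconst, hrefl]

lemma pathLengthOn_split (htri : ∀ x y z, d x z ≤ d x y + d y z) (hrefl : ∀ x, d x x = 0)
    {c : ℝ} (hab : a ≤ b) (hbc : b ≤ c) :
    pathLengthOn d γ a c ≤ pathLengthOn d γ a b + pathLengthOn d γ b c := by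
  refine pathLengthOn_le d γ fun k t ht h0 h1 => ?_
  set u : Fin (k+1) → ℝ := fun i => min (t i) b with hu
  set v : Fin (k+1) → ℝ := fun i => max (t i) b with hv
  have hsum : ∀ i : Fin k, ENNReal.ofReal (d (γ (t i.succ)) (γ (t i.castSucc))) ≤
      ENNReal.ofReal (d (γ (u i.succ)) (γ (u i.castSucc))) +
      ENNReal.ofReal (d (γ (v i.succ)) (γ (v i.castSucc))) := by
    intro i
    have hle : t i.castSucc ≤ t i.succ := ht (Fin.castSucc_le_succ i)
    rcases le_or_gt (t i.succ) b with hc1 | hc1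
    · have h1' : u i.succ = t i.succ := min_eq_left hc1
      have h2' : u i.castSucc = t i.castSucc := min_eq_left (hle.trans hc1)
      have h3' : v i.succ = b := max_eq_right hc1
      have h4' : v i.castSucc = b := max_eq_right (hle.trans hc1)
      simp [h1', h2', h3', h4', hrefl]
    rcases le_or_gt b (t i.castSucc) with hc2 | hc2
    · have h1' : v i.succ = t i.succ := max_eq_left (hc2.trans hle)
      have h2' : v i.castSucc = t i.castSucc := max_eq_left hc2
      have h3' : u i.succ = b := min_eq_right (hc2.trans hle)
      have h4' : u i.castSucc = b := min_eq_right hc2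
      simp [h1', h2', h3', h4', hrefl]
    · have h1' : u i.succ = b := min_eq_right hc1.le
      have h2' : u i.castSucc = t i.castSucc := min_eq_left hc2.le
      have h3' : v i.succ = t i.succ := max_eq_left hc1.le
      have h4' : v i.castSucc = b := max_eq_right hc2.le
      rw [h1', h2', h3', h4']
      calc ENNReal.ofReal (d (γ (t i.succ)) (γ (t i.castSucc)))
          ≤ ENNReal.ofReal (d (γ (t i.succ)) (γ b) + d (γ b) (γ (t i.castSucc))) :=
            ENNReal.ofReal_le_ofReal (htri _ _ _)
        _ ≤ ENNReal.ofReal (d (γ b) (γ (t i.castSucc))) +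
              ENNReal.ofReal (d (γ (t i.succ)) (γ b)) := by
            rw [add_comm]; exact ENNReal.ofReal_add_le
  calc ∑ i : Fin k, ENNReal.ofReal (d (γ (t i.succ)) (γ (t i.castSucc)))
      ≤ ∑ i : Fin k, (ENNReal.ofReal (d (γ (u i.succ)) (γ (u i.castSucc))) +
          ENNReal.ofReal (d (γ (v i.succ)) (γ (v i.castSucc)))) := Finset.sum_le_sum fun i _ => hsum i
    _ = (∑ i : Fin k, ENNReal.ofReal (d (γ (u i.succ)) (γ (u i.castSucc)))) +
        ∑ i : Fin k, ENNReal.ofReal (d (γ (v i.succ)) (γ (v i.castSucc))) := Finset.sum_add_distrib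
    _ ≤ pathLengthOn d γ a b + pathLengthOn d γ b c := by
        refine add_le_add (sum_le_pathLengthOn d γ (ht.min monotone_const) ?_ ?_)
          (sum_le_pathLengthOn d γ (ht.max monotone_const) ?_ ?_)
        · simp [hu, h0, min_eq_left hab]
        · simp [hu, h1, min_eq_right hbc]
        · simp [hv, h0, max_eq_right hab]
        · simp [hv, h1, max_eq_left hbc]

end helpers
section helpers2
variable {E : Type*} (d : E → E → ℝ) (γ : ℝ → E)

lemma pathLength_le_sum_uniform (htri : ∀ x y z, d x z ≤ d x y + d y z)
    (hrefl : ∀ x, d x x = 0) (m : ℕ) (hm : 0 < m) :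
    pathLength d γ ≤ ∑ i ∈ Finset.range m,
      pathLengthOn d γ ((i : ℝ)/(m : ℝ)) (((i : ℝ)+1)/(m : ℝ)) := by
  have hm' : (0:ℝ) < m := by exact_mod_cast hm
  have key : ∀ j : ℕ, j ≤ m → pathLengthOn d γ 0 ((j : ℝ)/(m : ℝ)) ≤
      ∑ i ∈ Finset.range j, pathLengthOn d γ ((i : ℝ)/(m : ℝ)) (((i : ℝ)+1)/(m : ℝ)) := by
    intro j
    induction j with
    | zero => intro _; simp [pathLengthOn_self d γ hrefl]
    | succ j ih =>
      intro hj
      have h1 : (0:ℝ) ≤ (j : ℝ)/(m : ℝ) := by positivity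
      have h2 : (j : ℝ)/(m : ℝ) ≤ ((j : ℝ)+1)/(m : ℝ) := by
        exact (div_le_div_iff_of_pos_right hm').mpr (by linarith)
      have hcast : ((j+1 : ℕ) : ℝ) = (j : ℝ) + 1 := by push_cast; ring
      rw [hcast, Finset.sum_range_succ]
      exact (pathLengthOn_split d γ htri hrefl h1 h2).trans
        (add_le_add_left (ih (Nat.le_of_succ_le hj)) _)
  have := key m le_rfl
  rw [div_self hm'.ne'] at this
  simpa [pathLength] using this

lemma ofReal_d_le_pathLength {c : ℝ} (hc : c ∈ Set.Icc (0:ℝ) 1) :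
    ENNReal.ofReal (d (γ c) (γ 0)) ≤ pathLength d γ := by
  have hmono : Monotone (![0, c, 1] : Fin 3 → ℝ) := by
    intro i j hij
    fin_cases i <;> fin_cases j <;>
      simp_all [Fin.le_def] <;> first | exact hc.1 | exact hc.2 | linarith [hc.1, hc.2]
  have := sum_le_pathLengthOn d γ (a := 0) (b := 1) (t := ![0, c, 1]) hmono rfl rfl
  rw [Fin.sum_univ_two] at this
  refine le_trans ?_ this
  have e1 : (![0, c, 1] : Fin 3 → ℝ) (Fin.succ 0) = c := rfl
  have e2 : (![0, c, 1] : Fin 3 → ℝ) (Fin.castSucc 0) = 0 := rfl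
  rw [e1, e2]
  exact le_add_of_nonneg_right zero_le

end helpers2
section helpers3
variable {E : Type*} (d : E → E → ℝ)

lemma pathLengthOn_reparam {σ Γ : ℝ → E} {i m : ℕ} (hm : 0 < m)
    (hpiece : ∀ t ∈ Set.Icc ((i:ℝ)/(m:ℝ)) (((i:ℝ)+1)/(m:ℝ)), Γ t = σ ((m:ℝ)*t - i)) :
    pathLengthOn d Γ ((i:ℝ)/(m:ℝ)) (((i:ℝ)+1)/(m:ℝ)) ≤ pathLength d σ := by
  have hm' : (0:ℝ) < m := by exact_mod_cast hm
  refine pathLengthOn_le d Γ fun k t ht h0 h1 => ?_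
  set s : Fin (k+1) → ℝ := fun j => (m:ℝ) * t j - i with hs
  have hmono : Monotone s := fun p q hpq => by
    have := ht hpq
    simp only [hs]
    nlinarith
  have hs0 : s 0 = 0 := by simp [hs, h0]; field_simp; ring
  have hs1 : s (Fin.last k) = 1 := by simp [hs, h1]; field_simp; ring
  have hmem : ∀ j, t j ∈ Set.Icc ((i:ℝ)/(m:ℝ)) (((i:ℝ)+1)/(m:ℝ)) := fun j =>
    ⟨h0 ▸ ht (Fin.zero_le j), h1 ▸ ht (Fin.le_last j)⟩
  have hsum : ∀ j : Fin k, ENNReal.ofReal (d (Γ (t j.succ)) (Γ (t j.castSucc))) =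
      ENNReal.ofReal (d (σ (s j.succ)) (σ (s j.castSucc))) := by
    intro j
    rw [hpiece _ (hmem j.succ), hpiece _ (hmem j.castSucc)]
  calc ∑ j : Fin k, ENNReal.ofReal (d (Γ (t j.succ)) (Γ (t j.castSucc)))
      = ∑ j : Fin k, ENNReal.ofReal (d (σ (s j.succ)) (σ (s j.castSucc))) :=
        Finset.sum_congr rfl fun j _ => hsum j
    _ ≤ pathLength d σ := sum_le_pathLengthOn d σ hmono hs0 hs1

lemma exists_near_geodesic (hlen : IsLengthDist d) (x y : E) (hnn : 0 ≤ d x y)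
    {δ : ℝ} (hδ : 0 < δ) :
    ∃ σ : ℝ → E, LipCurve d σ ∧ σ 0 = x ∧ σ 1 = y ∧
      pathLength d σ ≤ ENNReal.ofReal (d x y + δ) := by
  have h := hlen x y
  have hlt : (⨅ (γ : ℝ → E) (_ : LipCurve d γ) (_ : γ 0 = x) (_ : γ 1 = y), pathLength d γ)
      < ENNReal.ofReal (d x y + δ) := by
    rw [← h]
    exact (ENNReal.ofReal_lt_ofReal_iff (by linarith)).mpr (by linarith)
  simp only [iInf_lt_iff] at hlt
  obtain ⟨σ, hl, h0, h1, hlt⟩ := hlt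
  exact ⟨σ, hl, h0, h1, hlt.le⟩

end helpers3
section claimA
variable {X : Type*} [MetricSpace X] {Ω : Set X}

lemma dist_le_alpha_mul {α : ℝ} (hα : 1 < α) {e : Ω → Ω → ℝ} (he : MemD α Ω e)
    (x y : Ω) : dist x y ≤ α * e x y := by
  have hα0 : (0:ℝ) < α := by linarith
  have h := (he.2.2 x y).1
  have h2 := mul_le_mul_of_nonneg_left h hα0.le
  rw [← mul_assoc, mul_inv_cancel₀ hα0.ne', one_mul] at h2
  calc dist x y = dist (x : X) (y : X) := Subtype.dist_eq x y
    _ ≤ α * e x y := h2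

lemma memD_le_alpha_dist {α : ℝ} {e : Ω → Ω → ℝ} (he : MemD α Ω e)
    (x y : Ω) : e x y ≤ α * dist x y := by
  have h := (he.2.2 x y).2
  rw [Subtype.dist_eq]
  exact h

lemma memD_nonneg {α : ℝ} (hα : 1 < α) {e : Ω → Ω → ℝ} (he : MemD α Ω e)
    (x y : Ω) : 0 ≤ e x y := by
  have hα0 : (0:ℝ) < α := by linarith
  have h := (he.2.2 x y).1
  have h2 : (0:ℝ) ≤ α⁻¹ * dist (x : X) (y : X) := by positivity
  linarith

lemma abs_d_sub_d {e : Ω → Ω → ℝ} (hsym : ∀ x y, e x y = e y x)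
    (htri : ∀ x y z, e x z ≤ e x y + e y z) (x x' y y' : Ω) :
    |e x' y' - e x y| ≤ e x x' + e y y' := by
  rw [abs_sub_le_iff]
  constructor
  · have h1 := htri x' x y'
    have h2 := htri x y y'
    have h3 := hsym x x'
    have h4 := hsym y' y
    linarith
  · have h1 := htri x x' y
    have h2 := htri x' y' y
    have h3 := hsym y' y
    linarith

lemma claimA {α : ℝ} (hα : 1 < α)
    (dnn : Ω → Ω → ℝ) (hdnn : MemD α Ω dnn) (d : Ω → Ω → ℝ) (hd : MemD α Ω d)
    (γ : ℝ → Ω) {K1 : ℝ} (hK1 : 1 ≤ K1)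
    (hγ : ∀ s ∈ Set.Icc (0:ℝ) 1, ∀ t ∈ Set.Icc (0:ℝ) 1, dist (γ s) (γ t) ≤ K1 * |s - t|)
    {m : ℕ} (hm : 0 < m) {ε' : ℝ} (hε' : 0 < ε')
    (hdd : ∀ i : ℕ, i < m →
      |dnn (γ ((i:ℝ)/(m:ℝ))) (γ (((i:ℝ)+1)/(m:ℝ))) - d (γ ((i:ℝ)/(m:ℝ))) (γ (((i:ℝ)+1)/(m:ℝ)))| < ε') :
    ∃ Γ : ℝ → Ω, LipCurve (fun x y : Ω => dist x y) Γ ∧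
      (∀ t ∈ Set.Icc (0:ℝ) 1, dist (Γ t) (γ t) ≤ (α^2+1)*K1/(m:ℝ) + 2*α*ε') ∧
      pathLength dnn Γ ≤ pathLength d γ + ENNReal.ofReal ((m:ℝ) * (2*ε')) := by
  have hα0 : (0:ℝ) < α := by linarith
  have hm' : (0:ℝ) < m := by exact_mod_cast hm
  obtain ⟨⟨hsym, htri, hzero⟩, hlen, hcmp⟩ := hdnn
  have hdnnD : MemD α Ω dnn := ⟨⟨hsym, htri, hzero⟩, hlen, hcmp⟩
  have hrefl : ∀ x : Ω, dnn x x = 0 := fun x => (hzero x x).mpr rfl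
  set x : ℕ → Ω := fun i => γ ((i:ℝ)/(m:ℝ)) with hx
  have hxs : ∀ i : ℕ, x (i+1) = γ (((i:ℝ)+1)/(m:ℝ)) := fun i => by
    simp only [hx, Nat.cast_add, Nat.cast_one]
  have hnn : ∀ u v : Ω, 0 ≤ dnn u v := memD_nonneg hα hdnnD
  have hex : ∀ i : ℕ, ∃ σ : ℝ → Ω, LipCurve dnn σ ∧ σ 0 = x i ∧ σ 1 = x (i+1) ∧
      pathLength dnn σ ≤ ENNReal.ofReal (dnn (x i) (x (i+1)) + ε') :=
    fun i => exists_near_geodesic dnn hlen _ _ (hnn _ _) hε'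
  choose σ hσLip hσ0 hσ1 hσlen using hex
  choose Kl hKl using hσLip
  set I : ℝ → ℕ := fun t => min (m-1) ⌊(m:ℝ) * t⌋₊ with hI
  set Γ : ℝ → Ω := fun t => σ (I t) ((m:ℝ)*t - (I t : ℕ)) with hΓ
  -- piece identification
  have pieceEq : ∀ i : ℕ, i < m → ∀ t : ℝ, (i:ℝ)/(m:ℝ) ≤ t → t ≤ ((i:ℝ)+1)/(m:ℝ) →
      Γ t = σ i ((m:ℝ)*t - i) := by
    intro i hi t h1 h2
    have hit : (i:ℝ) ≤ (m:ℝ)*t := by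
      have := (div_le_iff₀ hm').mp h1; linarith
    rcases h2.lt_or_eq with hlt | heq2
    · have hmt : (m:ℝ)*t < (i:ℝ)+1 := by
        have := (lt_div_iff₀ hm').mp hlt; linarith
      have hfl : ⌊(m:ℝ)*t⌋₊ = i := by
        rw [Nat.floor_eq_iff (by linarith : (0:ℝ) ≤ (m:ℝ)*t)]
        constructor
        · exact_mod_cast hit
        · push_cast; linarith
      have hIt : I t = i := by
        simp only [hI, hfl]; exact min_eq_right (by omega)
      simp only [hΓ, hIt]
    · have hmt : (m:ℝ)*t = (i:ℝ)+1 := by rw [heq2]; field_simp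
      rcases Nat.lt_or_ge (i+1) m with h3 | h3
      · have hfl : ⌊(m:ℝ)*t⌋₊ = i+1 := by
          rw [hmt, show ((i:ℝ)+1) = ((i+1:ℕ):ℝ) by push_cast; ring]
          exact Nat.floor_natCast _
        have hIt : I t = i+1 := by
          simp only [hI, hfl]; exact min_eq_right (by omega)
        have ha : (m:ℝ)*t - ((i+1:ℕ):ℝ) = 0 := by rw [hmt]; push_cast; ring
        have hb : (m:ℝ)*t - (i:ℝ) = 1 := by rw [hmt]; ring
        calc Γ t = σ (i+1) ((m:ℝ)*t - ((i+1:ℕ):ℝ)) := by simp only [hΓ, hIt]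
          _ = σ (i+1) 0 := by rw [ha]
          _ = x (i+1) := hσ0 (i+1)
          _ = σ i 1 := (hσ1 i).symm
          _ = σ i ((m:ℝ)*t - i) := by rw [hb]
      · have him : i + 1 = m := by omega
        have hfl : ⌊(m:ℝ)*t⌋₊ = m := by
          rw [hmt, show ((i:ℝ)+1) = ((m:ℕ):ℝ) by rw [← him]; push_cast; ring]
          exact Nat.floor_natCast _
        have hIt : I t = i := by
          simp only [hI, hfl]; rw [min_eq_left (by omega)]; omega
        simp only [hΓ, hIt]
  -- Lipschitz bound on each piece
  set S : ℝ := ∑ j ∈ Finset.range m, |Kl j| + 1 with hS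
  have hS1 : (1:ℝ) ≤ S := by
    have : (0:ℝ) ≤ ∑ j ∈ Finset.range m, |Kl j| :=
      Finset.sum_nonneg fun j _ => abs_nonneg _
    simp only [hS]; linarith
  set C : ℝ := α * ((m:ℝ) * S) with hC
  have hC0 : (0:ℝ) ≤ C := by positivity
  have hpl : ∀ i : ℕ, i < m → ∀ s t : ℝ, (i:ℝ)/(m:ℝ) ≤ s → s ≤ t → t ≤ ((i:ℝ)+1)/(m:ℝ) →
      dist (Γ s) (Γ t) ≤ C * (t - s) := by
    intro i hi s t hs hst ht
    have hts : (0:ℝ) ≤ t - s := by linarith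
    have hsmem : (m:ℝ)*s - i ∈ Set.Icc (0:ℝ) 1 := by
      constructor
      · have := (div_le_iff₀ hm').mp hs; linarith
      · have := (le_div_iff₀ hm').mp (hst.trans ht); linarith
    have htmem : (m:ℝ)*t - i ∈ Set.Icc (0:ℝ) 1 := by
      constructor
      · have := (div_le_iff₀ hm').mp (hs.trans hst); linarith
      · have := (le_div_iff₀ hm').mp ht; linarith
    rw [pieceEq i hi s hs (hst.trans ht), pieceEq i hi t (hs.trans hst) ht]
    have h1 : dist (σ i ((m:ℝ)*s - i)) (σ i ((m:ℝ)*t - i)) ≤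
        α * dnn (σ i ((m:ℝ)*s - i)) (σ i ((m:ℝ)*t - i)) := dist_le_alpha_mul hα hdnnD _ _
    have h2 : dnn (σ i ((m:ℝ)*s - i)) (σ i ((m:ℝ)*t - i)) ≤ Kl i * |((m:ℝ)*s - i) - ((m:ℝ)*t - i)| :=
      hKl i _ hsmem _ htmem
    have h3 : |((m:ℝ)*s - i) - ((m:ℝ)*t - i)| = (m:ℝ) * (t - s) := by
      rw [show ((m:ℝ)*s - i) - ((m:ℝ)*t - i) = -((m:ℝ)*(t-s)) by ring, abs_neg,
        abs_of_nonneg (by positivity)]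
    rw [h3] at h2
    have hKle : Kl i ≤ S := by
      have h4 := Finset.single_le_sum (f := fun j => |Kl j|) (fun j _ => abs_nonneg _)
        (Finset.mem_range.mpr hi)
      have h5 := le_abs_self (Kl i)
      simp only [hS]; linarith
    have h6 : Kl i * ((m:ℝ)*(t-s)) ≤ S * ((m:ℝ)*(t-s)) :=
      mul_le_mul_of_nonneg_right hKle (by positivity)
    calc dist (σ i ((m:ℝ)*s - i)) (σ i ((m:ℝ)*t - i))
        ≤ α * (Kl i * ((m:ℝ)*(t-s))) := h1.trans (mul_le_mul_of_nonneg_left h2 hα0.le)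
      _ ≤ α * (S * ((m:ℝ)*(t-s))) := mul_le_mul_of_nonneg_left h6 hα0.le
      _ = C * (t - s) := by rw [hC]; ring
  -- glue the Lipschitz bound
  have hglue : ∀ j : ℕ, j ≤ m → ∀ s t : ℝ, 0 ≤ s → s ≤ t → t ≤ (j:ℝ)/(m:ℝ) →
      dist (Γ s) (Γ t) ≤ C * (t - s) := by
    intro j
    induction j with
    | zero =>
      intro _ s t hs hst ht
      simp only [Nat.cast_zero, zero_div] at ht
      have : s = t := le_antisymm hst (by linarith)
      subst this; simp
    | succ j ih =>
      intro hj s t hs hst ht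
      have hcast : ((j+1:ℕ):ℝ) = (j:ℝ)+1 := by push_cast; ring
      rw [hcast] at ht
      rcases le_or_gt t ((j:ℝ)/(m:ℝ)) with h | h
      · exact ih (by omega) s t hs hst h
      rcases le_or_gt ((j:ℝ)/(m:ℝ)) s with h2 | h2
      · exact hpl j (by omega) s t h2 hst ht
      · calc dist (Γ s) (Γ t) ≤ dist (Γ s) (Γ ((j:ℝ)/(m:ℝ))) + dist (Γ ((j:ℝ)/(m:ℝ))) (Γ t) :=
            dist_triangle _ _ _
          _ ≤ C * ((j:ℝ)/(m:ℝ) - s) + C * (t - (j:ℝ)/(m:ℝ)) :=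
            add_le_add (ih (by omega) s _ hs h2.le le_rfl)
              (hpl j (by omega) _ t le_rfl h.le ht)
          _ = C * (t - s) := by ring
  have hLipΓ : LipCurve (fun x y : Ω => dist x y) Γ := by
    refine ⟨C, fun s hs t ht => ?_⟩
    show dist (Γ s) (Γ t) ≤ C * |s - t|
    rcases le_total s t with h | h
    · rw [abs_sub_comm, abs_of_nonneg (by linarith)]
      exact hglue m le_rfl s t hs.1 h (by rw [div_self hm'.ne']; exact ht.2)
    · rw [dist_comm, abs_of_nonneg (by linarith)]
      exact hglue m le_rfl t s ht.1 h (by rw [div_self hm'.ne']; exact hs.2)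
  -- stray bound
  have hstray : ∀ i : ℕ, i < m → ∀ c ∈ Set.Icc (0:ℝ) 1,
      dnn (σ i c) (x i) ≤ d (x i) (x (i+1)) + 2*ε' := by
    intro i hi c hc
    have h1 := (ofReal_d_le_pathLength dnn (σ i) hc).trans (hσlen i)
    rw [hσ0 i] at h1
    have h2 : dnn (σ i c) (x i) ≤ dnn (x i) (x (i+1)) + ε' :=
      (ENNReal.ofReal_le_ofReal_iff (by have := hnn (x i) (x (i+1)); linarith)).mp h1
    have h3 : dnn (x i) (x (i+1)) ≤ d (x i) (x (i+1)) + ε' := by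
      rw [hxs i]
      show dnn (γ ((i:ℝ)/(m:ℝ))) (γ (((i:ℝ)+1)/(m:ℝ))) ≤
        d (γ ((i:ℝ)/(m:ℝ))) (γ (((i:ℝ)+1)/(m:ℝ))) + ε'
      have h4 := hdd i hi
      rw [abs_sub_lt_iff] at h4
      linarith [h4.1]
    linarith
  refine ⟨Γ, hLipΓ, ?_, ?_⟩
  · -- uniform distance bound
    intro t ht
    obtain ⟨i, hi, hts1, hts2⟩ : ∃ i : ℕ, i < m ∧ (i:ℝ)/(m:ℝ) ≤ t ∧ t ≤ ((i:ℝ)+1)/(m:ℝ) := by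
      rcases Nat.lt_or_ge ⌊(m:ℝ)*t⌋₊ m with hc | hc
      · refine ⟨⌊(m:ℝ)*t⌋₊, hc, ?_, ?_⟩
        · rw [div_le_iff₀ hm']
          have := Nat.floor_le (mul_nonneg hm'.le ht.1)
          linarith
        · rw [le_div_iff₀ hm']
          have := Nat.lt_floor_add_one ((m:ℝ)*t)
          push_cast at this ⊢
          linarith
      · have h5 : ((m:ℕ):ℝ) ≤ (m:ℝ)*t := by
          have h6 := (Nat.le_floor_iff (mul_nonneg hm'.le ht.1)).mp (by exact_mod_cast hc)
          exact_mod_cast h6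
        refine ⟨m-1, by omega, ?_, ?_⟩
        · rw [Nat.cast_sub (by omega), Nat.cast_one, div_le_iff₀ hm']
          push_cast at h5
          linarith
        · rw [Nat.cast_sub (by omega), Nat.cast_one, le_div_iff₀ hm']
          nlinarith [ht.2]
    have hΓt : Γ t = σ i ((m:ℝ)*t - i) := pieceEq i hi t hts1 hts2
    have hargm : (m:ℝ)*t - i ∈ Set.Icc (0:ℝ) 1 := by
      constructor
      · have := (div_le_iff₀ hm').mp hts1; linarith
      · have := (le_div_iff₀ hm').mp hts2; linarith
    have him : (i:ℝ)/(m:ℝ) ∈ Set.Icc (0:ℝ) 1 := by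
      constructor
      · positivity
      · rw [div_le_one hm']; exact_mod_cast hi.le
    have him1 : ((i:ℝ)+1)/(m:ℝ) ∈ Set.Icc (0:ℝ) 1 := by
      constructor
      · positivity
      · rw [div_le_one hm']
        have : (i:ℝ)+1 ≤ (m:ℝ) := by exact_mod_cast hi
        linarith
    have hdx : d (x i) (x (i+1)) ≤ α * (K1 / (m:ℝ)) := by
      have h1 : d (x i) (x (i+1)) ≤ α * dist (x i) (x (i+1)) := memD_le_alpha_dist hd _ _
      have h2 : dist (x i) (x (i+1)) ≤ K1 * |(i:ℝ)/(m:ℝ) - ((i:ℝ)+1)/(m:ℝ)| := by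
        rw [hxs i]
        exact hγ _ him _ him1
      have h3 : |(i:ℝ)/(m:ℝ) - ((i:ℝ)+1)/(m:ℝ)| = 1/(m:ℝ) := by
        rw [show (i:ℝ)/(m:ℝ) - ((i:ℝ)+1)/(m:ℝ) = -(1/(m:ℝ)) by ring, abs_neg,
          abs_of_nonneg (by positivity)]
      rw [h3] at h2
      calc d (x i) (x (i+1)) ≤ α * (K1 * (1/(m:ℝ))) :=
            h1.trans (mul_le_mul_of_nonneg_left h2 hα0.le)
        _ = α * (K1/(m:ℝ)) := by ring
    have hb1 : dist (Γ t) (x i) ≤ α * (α * (K1/(m:ℝ)) + 2*ε') := by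
      rw [hΓt]
      calc dist (σ i ((m:ℝ)*t - i)) (x i) ≤ α * dnn (σ i ((m:ℝ)*t - i)) (x i) :=
            dist_le_alpha_mul hα hdnnD _ _
        _ ≤ α * (d (x i) (x (i+1)) + 2*ε') :=
            mul_le_mul_of_nonneg_left (hstray i hi _ hargm) hα0.le
        _ ≤ α * (α * (K1/(m:ℝ)) + 2*ε') :=
            mul_le_mul_of_nonneg_left (by linarith) hα0.le
    have hb2 : dist (x i) (γ t) ≤ K1 * (1/(m:ℝ)) := by
      have h2 : dist (x i) (γ t) ≤ K1 * |(i:ℝ)/(m:ℝ) - t| := by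
        exact hγ _ him _ ht
      have h3 : |(i:ℝ)/(m:ℝ) - t| ≤ 1/(m:ℝ) := by
        rw [abs_sub_comm, abs_of_nonneg (by linarith)]
        have : ((i:ℝ)+1)/(m:ℝ) - (i:ℝ)/(m:ℝ) = 1/(m:ℝ) := by ring
        linarith
      calc dist (x i) (γ t) ≤ K1 * |(i:ℝ)/(m:ℝ) - t| := h2
        _ ≤ K1 * (1/(m:ℝ)) := mul_le_mul_of_nonneg_left h3 (by linarith)
    calc dist (Γ t) (γ t) ≤ dist (Γ t) (x i) + dist (x i) (γ t) := dist_triangle _ _ _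
      _ ≤ α * (α * (K1/(m:ℝ)) + 2*ε') + K1 * (1/(m:ℝ)) := add_le_add hb1 hb2
      _ = (α^2+1)*K1/(m:ℝ) + 2*α*ε' := by field_simp; ring
  · -- length bound
    have hss := pathLength_le_sum_uniform dnn Γ htri hrefl m hm
    have h2 : ∀ i ∈ Finset.range m, pathLengthOn dnn Γ ((i:ℝ)/(m:ℝ)) (((i:ℝ)+1)/(m:ℝ)) ≤
        ENNReal.ofReal (d (x i) (x (i+1))) + ENNReal.ofReal (2*ε') := by
      intro i hi'
      have hi := Finset.mem_range.mp hi'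
      calc pathLengthOn dnn Γ ((i:ℝ)/(m:ℝ)) (((i:ℝ)+1)/(m:ℝ)) ≤ pathLength dnn (σ i) :=
            pathLengthOn_reparam dnn hm (fun t htt => pieceEq i hi t htt.1 htt.2)
        _ ≤ ENNReal.ofReal (dnn (x i) (x (i+1)) + ε') := hσlen i
        _ ≤ ENNReal.ofReal (d (x i) (x (i+1)) + 2*ε') := by
            apply ENNReal.ofReal_le_ofReal
            rw [hxs i]
            show dnn (γ ((i:ℝ)/(m:ℝ))) (γ (((i:ℝ)+1)/(m:ℝ))) + ε' ≤
              d (γ ((i:ℝ)/(m:ℝ))) (γ (((i:ℝ)+1)/(m:ℝ))) + 2*ε'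
            have h4 := hdd i hi
            rw [abs_sub_lt_iff] at h4
            linarith [h4.1]
        _ ≤ ENNReal.ofReal (d (x i) (x (i+1))) + ENNReal.ofReal (2*ε') :=
            ENNReal.ofReal_add_le
    have h3 : ∑ i ∈ Finset.range m, ENNReal.ofReal (d (x i) (x (i+1))) ≤ pathLength d γ := by
      have hmt : Monotone (fun j : Fin (m+1) => ((j:ℕ):ℝ)/(m:ℝ)) := by
        intro p q hpq
        have : ((p:ℕ):ℝ) ≤ ((q:ℕ):ℝ) := by exact_mod_cast hpq
        exact (div_le_div_iff_of_pos_right hm').mpr this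
      have hle := sum_le_pathLengthOn d γ (a := 0) (b := 1)
        (t := fun j : Fin (m+1) => ((j:ℕ):ℝ)/(m:ℝ)) hmt (by simp)
        (by simp [Fin.last]; exact hm.ne')
      refine le_trans (le_of_eq ?_) hle
      rw [← Fin.sum_univ_eq_sum_range (fun i => ENNReal.ofReal (d (x i) (x (i+1)))) m]
      refine Finset.sum_congr rfl fun i _ => ?_
      exact congrArg ENNReal.ofReal (hd.1.1 (x i) (x ((i:ℕ)+1)))
    calc pathLength dnn Γ
        ≤ ∑ i ∈ Finset.range m, pathLengthOn dnn Γ ((i:ℝ)/(m:ℝ)) (((i:ℝ)+1)/(m:ℝ)) := hss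
      _ ≤ ∑ i ∈ Finset.range m,
            (ENNReal.ofReal (d (x i) (x (i+1))) + ENNReal.ofReal (2*ε')) :=
          Finset.sum_le_sum h2
      _ = (∑ i ∈ Finset.range m, ENNReal.ofReal (d (x i) (x (i+1)))) +
            m • ENNReal.ofReal (2*ε') := by
          rw [Finset.sum_add_distrib, Finset.sum_const, Finset.card_range]
      _ ≤ pathLength d γ + ENNReal.ofReal ((m:ℝ) * (2*ε')) := by
          refine add_le_add h3 (le_of_eq ?_)
          rw [nsmul_eq_mul, ← ENNReal.ofReal_natCast m,
            ← ENNReal.ofReal_mul (by positivity : (0:ℝ) ≤ ((m:ℕ):ℝ))]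

end claimA
section claimB
variable {X : Type*} [MetricSpace X] {Ω : Set X}

lemma claimB {α : ℝ} (hα : 1 < α)
    (dn : ℕ → Ω → Ω → ℝ) (hdn : ∀ n, MemD α Ω (dn n)) (d : Ω → Ω → ℝ) (hd : MemD α Ω d)
    (hconv : TendstoUnifCompactly dn d) (γ : ℝ → Ω)
    (hγ : LipCurve (fun x y : Ω => dist x y) γ) {ε : ℝ} (hε : 0 < ε) :
    ∃ N : ℕ, ∀ n ≥ N, ∃ Γ : ℝ → Ω, LipCurve (fun x y : Ω => dist x y) Γ ∧
      (∀ t ∈ Set.Icc (0:ℝ) 1, dist (Γ t) (γ t) ≤ ε) ∧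
      pathLength (dn n) Γ ≤ pathLength d γ + ENNReal.ofReal ε := by
  have hα0 : (0:ℝ) < α := by linarith
  obtain ⟨K, hK⟩ := hγ
  set K1 := max K 1 with hK1def
  have hK1 : 1 ≤ K1 := le_max_right _ _
  have hγ' : ∀ s ∈ Set.Icc (0:ℝ) 1, ∀ t ∈ Set.Icc (0:ℝ) 1,
      dist (γ s) (γ t) ≤ K1 * |s - t| := fun s hs t ht =>
    (hK s hs t ht).trans (mul_le_mul_of_nonneg_right (le_max_left _ _) (abs_nonneg _))
  set m : ℕ := max 1 ⌈(α^2+1)*K1*2/ε⌉₊ with hmdef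
  have hm : 0 < m := lt_of_lt_of_le one_pos (le_max_left _ _)
  have hm' : (0:ℝ) < m := by exact_mod_cast hm
  have hmain : (α^2+1)*K1/(m:ℝ) ≤ ε/2 := by
    rw [div_le_iff₀ hm']
    have hcm : ⌈(α^2+1)*K1*2/ε⌉₊ ≤ m := le_max_right _ _
    have h1 : (α^2+1)*K1*2/ε ≤ (m:ℝ) := le_trans (Nat.le_ceil _) (by exact_mod_cast hcm)
    rw [div_le_iff₀ hε] at h1
    nlinarith
  set ε' := min (ε/(8*α)) (ε/(4*(m:ℝ))) with hε'def
  have hε' : 0 < ε' := lt_min (by positivity) (by positivity)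
  have hlip : LipschitzOnWith (Real.toNNReal K1) γ (Set.Icc 0 1) := by
    apply LipschitzOnWith.of_dist_le_mul
    intro s hs t ht
    rw [Real.coe_toNNReal _ (by linarith), Real.dist_eq]
    exact hγ' s hs t ht
  have hAc : IsCompact (γ '' Set.Icc 0 1) := isCompact_Icc.image_of_continuousOn hlip.continuousOn
  have hKKc : IsCompact ((γ '' Set.Icc 0 1) ×ˢ (γ '' Set.Icc 0 1)) := hAc.prod hAc
  obtain ⟨N, hN⟩ := hconv _ hKKc ε' hε'
  refine ⟨N, fun n hn => ?_⟩
  have hdd : ∀ i : ℕ, i < m →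
      |dn n (γ ((i:ℝ)/(m:ℝ))) (γ (((i:ℝ)+1)/(m:ℝ))) -
        d (γ ((i:ℝ)/(m:ℝ))) (γ (((i:ℝ)+1)/(m:ℝ)))| < ε' := by
    intro i hi
    have h1 : (i:ℝ)/(m:ℝ) ∈ Set.Icc (0:ℝ) 1 :=
      ⟨by positivity, by rw [div_le_one hm']; exact_mod_cast hi.le⟩
    have h2 : ((i:ℝ)+1)/(m:ℝ) ∈ Set.Icc (0:ℝ) 1 := by
      refine ⟨by positivity, ?_⟩
      rw [div_le_one hm']
      have : ((i+1:ℕ):ℝ) ≤ (m:ℝ) := by exact_mod_cast Nat.succ_le_of_lt hi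
      push_cast at this
      linarith
    exact hN n hn (γ ((i:ℝ)/(m:ℝ)), γ (((i:ℝ)+1)/(m:ℝ)))
      (Set.mem_prod.mpr ⟨Set.mem_image_of_mem γ h1, Set.mem_image_of_mem γ h2⟩)
  obtain ⟨Γ, hΓ1, hΓ2, hΓ3⟩ := claimA hα (dn n) (hdn n) d hd γ hK1 hγ' hm hε' hdd
  refine ⟨Γ, hΓ1, fun t ht => ?_, ?_⟩
  · have hb := hΓ2 t ht
    have e1 : ε' ≤ ε/(8*α) := min_le_left _ _
    have e2 : 2*α*ε' ≤ 2*α*(ε/(8*α)) := by nlinarith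
    have e3 : 2*α*(ε/(8*α)) = ε/4 := by field_simp; ring
    linarith
  · refine hΓ3.trans (add_le_add_right (ENNReal.ofReal_le_ofReal ?_) _)
    have h6 : ε' ≤ ε/(4*(m:ℝ)) := min_le_right _ _
    calc (m:ℝ)*(2*ε') ≤ (m:ℝ)*(2*(ε/(4*(m:ℝ)))) :=
          mul_le_mul_of_nonneg_left (by linarith) hm'.le
      _ = ε/2 := by field_simp; ring
      _ ≤ ε := by linarith

end claimB

/-- uniform convergence of the distances on compact subsets of `Ω × Ω`
implies Γ-convergence of the length functionals `L_{dn}` to `L_d` on Lipschitz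
curves `[0,1] → Ω` with the topology of uniform convergence. -/
theorem stmt13 {X : Type*} [MetricSpace X] [LocallyCompactSpace X] [CompleteSpace X]
    (Ω : Set X) (hΩ : IsOpen Ω) (α : ℝ) (hα : 1 < α)
    (hne : ∃ d₀ : Ω → Ω → ℝ, MemD α Ω d₀)
    (dn : ℕ → Ω → Ω → ℝ) (hdn : ∀ n, MemD α Ω (dn n))
    (d : Ω → Ω → ℝ) (hd : MemD α Ω d)
    (hconv : TendstoUnifCompactly dn d) :
    GammaConvLengths dn d := by
  have hα0 : (0:ℝ) < α := by linarith
  constructor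
  · -- liminf inequality
    intro γn γ hLn hLip hUnif
    obtain ⟨K, hK⟩ := hLip
    set K1 := max K 1 with hK1def
    have hγ' : ∀ s ∈ Set.Icc (0:ℝ) 1, ∀ t ∈ Set.Icc (0:ℝ) 1,
        dist (γ s) (γ t) ≤ K1 * |s - t| := fun s hs t ht =>
      (hK s hs t ht).trans (mul_le_mul_of_nonneg_right (le_max_left _ _) (abs_nonneg _))
    have hlip : LipschitzOnWith (Real.toNNReal K1) γ (Set.Icc 0 1) := by
      apply LipschitzOnWith.of_dist_le_mul
      intro s hs t ht
      rw [Real.coe_toNNReal _ (le_trans zero_le_one (le_max_right K 1)), Real.dist_eq]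
      exact hγ' s hs t ht
    have hAc : IsCompact (γ '' Set.Icc 0 1) :=
      isCompact_Icc.image_of_continuousOn hlip.continuousOn
    have hval : IsCompact (Subtype.val '' (γ '' Set.Icc 0 1)) :=
      hAc.image continuous_subtype_val
    have hsubΩ : Subtype.val '' (γ '' Set.Icc 0 1) ⊆ Ω := by
      rintro _ ⟨y, _, rfl⟩; exact y.2
    obtain ⟨L, hLc, hint, hLΩ⟩ := exists_compact_between hval hΩ hsubΩ
    obtain ⟨r, hr, hthick⟩ := hval.exists_thickening_subset_open isOpen_interior hint
    set B : Set Ω := Subtype.val ⁻¹' L with hB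
    have hBc : IsCompact B := by
      rw [Subtype.isCompact_iff]
      have hBL : Subtype.val '' B = L := by
        apply Set.eq_of_subset_of_subset
        · rintro _ ⟨y, hy, rfl⟩; exact hy
        · intro z hz; exact ⟨⟨z, hLΩ hz⟩, hz, rfl⟩
      rw [hBL]; exact hLc
    have hpt : ∀ s ∈ Set.Icc (0:ℝ) 1, ∀ t ∈ Set.Icc (0:ℝ) 1,
        Filter.Tendsto (fun n => dn n (γn n s) (γn n t)) atTop (𝓝 (d (γ s) (γ t))) := by
      intro s hs t ht
      rw [Metric.tendsto_atTop]
      intro ε hε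
      obtain ⟨N1, hN1⟩ := hconv (B ×ˢ B) (hBc.prod hBc) (ε/2) (by linarith)
      obtain ⟨N2, hN2⟩ := hUnif (min r (ε/(8*α))) (lt_min hr (by positivity))
      refine ⟨max N1 N2, fun n hn => ?_⟩
      have hn1 : n ≥ N1 := le_trans (le_max_left _ _) hn
      have hn2 : n ≥ N2 := le_trans (le_max_right _ _) hn
      have hmem : ∀ u ∈ Set.Icc (0:ℝ) 1, γn n u ∈ B := by
        intro u hu
        have h1 := hN2 n hn2 u hu
        have h2 : dist ((γn n u : X)) ((γ u : X)) < r := by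
          rw [← Subtype.dist_eq]
          exact lt_of_lt_of_le h1 (min_le_left _ _)
        have h3 : (γn n u : X) ∈ Metric.thickening r (Subtype.val '' (γ '' Set.Icc 0 1)) :=
          Metric.mem_thickening_iff.mpr
            ⟨(γ u : X), ⟨γ u, Set.mem_image_of_mem γ hu, rfl⟩, h2⟩
        exact Set.mem_preimage.mpr (interior_subset (hthick h3))
      have key1 : |dn n (γn n s) (γn n t) - d (γn n s) (γn n t)| < ε/2 :=
        hN1 n hn1 (γn n s, γn n t) (Set.mem_prod.mpr ⟨hmem s hs, hmem t ht⟩)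
      have key2 : |d (γn n s) (γn n t) - d (γ s) (γ t)| ≤
          d (γ s) (γn n s) + d (γ t) (γn n t) := abs_d_sub_d hd.1.1 hd.1.2.1 _ _ _ _
      have hds : d (γ s) (γn n s) ≤ α * dist (γ s) (γn n s) := memD_le_alpha_dist hd _ _
      have hdt : d (γ t) (γn n t) ≤ α * dist (γ t) (γn n t) := memD_le_alpha_dist hd _ _
      have hs2 : dist (γ s) (γn n s) ≤ ε/(8*α) := by
        rw [dist_comm]
        exact le_trans (hN2 n hn2 s hs).le (min_le_right _ _)
      have ht2 : dist (γ t) (γn n t) ≤ ε/(8*α) := by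
        rw [dist_comm]
        exact le_trans (hN2 n hn2 t ht).le (min_le_right _ _)
      have hαε : α * (ε/(8*α)) = ε/8 := by field_simp
      have hds' : d (γ s) (γn n s) ≤ ε/8 := by
        refine hds.trans ?_
        rw [← hαε]
        exact mul_le_mul_of_nonneg_left hs2 hα0.le
      have hdt' : d (γ t) (γn n t) ≤ ε/8 := by
        refine hdt.trans ?_
        rw [← hαε]
        exact mul_le_mul_of_nonneg_left ht2 hα0.le
      rw [Real.dist_eq]
      have habs := abs_sub_le (dn n (γn n s) (γn n t)) (d (γn n s) (γn n t)) (d (γ s) (γ t))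
      linarith [abs_le.mp key2, abs_le.mp key1.le]
    show pathLengthOn d γ 0 1 ≤ _
    refine pathLengthOn_le d γ fun k tt htt h0 h1 => ?_
    have hmemI : ∀ j : Fin (k+1), tt j ∈ Set.Icc (0:ℝ) 1 := fun j =>
      ⟨h0 ▸ htt (Fin.zero_le j), h1 ▸ htt (Fin.le_last j)⟩
    have hTsum : Filter.Tendsto
        (fun n => ∑ i : Fin k,
          ENNReal.ofReal (dn n (γn n (tt i.succ)) (γn n (tt i.castSucc)))) atTop
        (𝓝 (∑ i : Fin k, ENNReal.ofReal (d (γ (tt i.succ)) (γ (tt i.castSucc))))) := by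
      refine tendsto_finset_sum _ fun i _ => ?_
      exact (ENNReal.continuous_ofReal.tendsto _).comp
        (hpt _ (hmemI i.succ) _ (hmemI i.castSucc))
    calc ∑ i : Fin k, ENNReal.ofReal (d (γ (tt i.succ)) (γ (tt i.castSucc)))
        = liminf (fun n => ∑ i : Fin k,
            ENNReal.ofReal (dn n (γn n (tt i.succ)) (γn n (tt i.castSucc)))) atTop :=
          hTsum.liminf_eq.symm
      _ ≤ liminf (fun n => pathLength (dn n) (γn n)) atTop :=
          liminf_le_liminf (Filter.Eventually.of_forall fun n =>
            sum_le_pathLengthOn (dn n) (γn n) htt h0 h1)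
  · -- limsup inequality : recovery sequence
    intro γ hγ
    have hB : ∀ j : ℕ, ∃ N : ℕ, ∀ n ≥ N, ∃ Γ : ℝ → Ω,
        LipCurve (fun x y : Ω => dist x y) Γ ∧
        (∀ t ∈ Set.Icc (0:ℝ) 1, dist (Γ t) (γ t) ≤ 1/((j:ℝ)+1)) ∧
        pathLength (dn n) Γ ≤ pathLength d γ + ENNReal.ofReal (1/((j:ℝ)+1)) :=
      fun j => claimB hα dn hdn d hd hconv γ hγ (by positivity)
    choose N0 hN0 using hB
    set Nf : ℕ → ℕ := fun j => j + ∑ i ∈ Finset.range (j+1), N0 i with hNf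
    have hNge : ∀ j, N0 j ≤ Nf j := fun j =>
      le_trans (Finset.single_le_sum (fun i _ => Nat.zero_le _)
        (Finset.self_mem_range_succ j)) (Nat.le_add_left _ _)
    have hNgej : ∀ j, j ≤ Nf j := fun j => Nat.le_add_right _ _
    set J : ℕ → ℕ := fun n => Nat.findGreatest (fun j => Nf j ≤ n) n with hJ
    have hJspec : ∀ n, Nf 0 ≤ n → Nf (J n) ≤ n := fun n hn =>
      Nat.findGreatest_spec (P := fun j => Nf j ≤ n) (Nat.zero_le n) hn
    have hJge : ∀ j n, Nf j ≤ n → j ≤ J n := fun j n h =>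
      Nat.le_findGreatest (P := fun j => Nf j ≤ n) (le_trans (hNgej j) h) h
    have hex : ∀ n : ℕ, ∃ Γ : ℝ → Ω, LipCurve (fun x y : Ω => dist x y) Γ ∧
        (Nf 0 ≤ n → (∀ t ∈ Set.Icc (0:ℝ) 1, dist (Γ t) (γ t) ≤ 1/((J n : ℝ)+1)) ∧
          pathLength (dn n) Γ ≤ pathLength d γ + ENNReal.ofReal (1/((J n : ℝ)+1))) := by
      intro n
      by_cases h : Nf 0 ≤ n
      · obtain ⟨Γ, h1, h2, h3⟩ := hN0 (J n) n (le_trans (hNge (J n)) (hJspec n h))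
        exact ⟨Γ, h1, fun _ => ⟨h2, h3⟩⟩
      · exact ⟨γ, hγ, fun hc => absurd hc h⟩
    choose Γs hΓLip hΓprop using hex
    refine ⟨Γs, hΓLip, ?_, ?_⟩
    · intro ε hε
      obtain ⟨j, hj⟩ := exists_nat_one_div_lt hε
      refine ⟨max (Nf j) (Nf 0), fun n hn u hu => ?_⟩
      have h1 := (hΓprop n (le_trans (le_max_right _ _) hn)).1 u hu
      have h2 : j ≤ J n := hJge j n (le_trans (le_max_left _ _) hn)
      have h3 : 1/((J n : ℝ)+1) ≤ 1/((j:ℝ)+1) := by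
        apply one_div_le_one_div_of_le (by positivity)
        have : ((j:ℕ):ℝ) ≤ ((J n : ℕ):ℝ) := by exact_mod_cast h2
        linarith
      calc dist (Γs n u) (γ u) ≤ 1/((J n : ℝ)+1) := h1
        _ ≤ 1/((j:ℝ)+1) := h3
        _ < ε := hj
    · have hJtop : Filter.Tendsto J atTop atTop := by
        rw [tendsto_atTop_atTop]
        exact fun b => ⟨Nf b, fun n hn => hJge b n hn⟩
      have htend0 : Filter.Tendsto (fun n => ENNReal.ofReal (1/((J n : ℝ)+1))) atTop (𝓝 0) := by
        have h1 : Filter.Tendsto (fun j : ℕ => (1:ℝ)/((j:ℝ)+1)) atTop (𝓝 0) :=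
          tendsto_one_div_add_atTop_nhds_zero_nat
        have h3 := (ENNReal.continuous_ofReal.tendsto 0).comp (h1.comp hJtop)
        simpa [Function.comp_def] using h3
      have htend : Filter.Tendsto
          (fun n => pathLength d γ + ENNReal.ofReal (1/((J n : ℝ)+1))) atTop
          (𝓝 (pathLength d γ)) := by
        have h4 := Filter.Tendsto.const_add (pathLength d γ) htend0
        simpa using h4
      refine le_trans (Filter.limsup_le_limsup ?_) (le_of_eq htend.limsup_eq)
      exact Filter.eventually_atTop.mpr ⟨Nf 0, fun n hn => (hΓprop n hn).2⟩
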